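/- Every acyclic Kripke structure with n states has at most 2^n traces. -/
import Mathlib

/-- A Kripke structure over state type `S` and atomic propositions `AP`. -/
structure Kripke (S : Type) (AP : Type) where
  init : S
  rel : S → S → Prop
  label : S → Set AP
  total : ∀ s, ∃ s', rel s s'

/-- An infinite path starting at the initial state. -/
def Kripke.IsPath {S AP : Type} (K : Kripke S AP) (p : ℕ → S) : Prop :=
  p 0 = K.init ∧ ∀ i, K.rel (p i) (p (i + 1))

/-- A trace is the labeling sequence of an infinite path from the initial state. -/
def Kripke.IsTrace {S AP : Type} (K : Kripke S AP) (t : ℕ → Set AP) : Prop :=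
  ∃ p : ℕ → S, K.IsPath p ∧ ∀ i, t i = K.label (p i)

/-- Acyclic: self-loops only occur on states with no other successor, and the transition
relation restricted to pairs of distinct states has no cycles. -/
def Kripke.Acyclic {S AP : Type} (K : Kripke S AP) : Prop :=
  (∀ s s', K.rel s s → K.rel s s' → s' = s) ∧
  ∀ s, ¬ Relation.TransGen (fun a b => a ≠ b ∧ K.rel a b) s s

open Relation

private lemma kripke_mono {S AP : Type} {K : Kripke S AP} {p : ℕ → S}
    (hp : K.IsPath p) {i j : ℕ} (hij : i ≤ j) :
    p i = p j ∨ TransGen (fun a b => a ≠ b ∧ K.rel a b) (p i) (p j) := by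
  obtain ⟨d, rfl⟩ := Nat.exists_eq_add_of_le hij
  clear hij
  induction d with
  | zero => left; rfl
  | succ d ih =>
    have step : K.rel (p (i + d)) (p (i + d + 1)) := hp.2 _
    have : p (i + (d + 1)) = p (i + d + 1) := by ring_nf
    rw [show i + (d + 1) = i + d + 1 from rfl]
    by_cases he : p (i + d) = p (i + d + 1)
    · rcases ih with h1 | h1
      · left; rw [h1, he]
      · right; rwa [← he]
    · have single : TransGen (fun a b => a ≠ b ∧ K.rel a b) (p (i + d)) (p (i + d + 1)) :=
        TransGen.single ⟨he, step⟩
      rcases ih with h1 | h1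
      · right; rwa [h1]
      · right; exact h1.trans single

private lemma kripke_path_eq {S AP : Type} {K : Kripke S AP} (h : K.Acyclic)
    {p q : ℕ → S} (hp : K.IsPath p) (hq : K.IsPath q)
    (hr : Set.range p = Set.range q) : p = q := by
  have asymm : ∀ a b : S, TransGen (fun a b => a ≠ b ∧ K.rel a b) a b →
      TransGen (fun a b => a ≠ b ∧ K.rel a b) b a → False :=
    fun a b h1 h2 => h.2 a (h1.trans h2)
  funext i
  induction i with
  | zero => rw [hp.1, hq.1]
  | succ i ih =>
    by_cases hsl : K.rel (p i) (p i)
    · have h1 : p (i + 1) = p i := h.1 _ _ hsl (hp.2 i)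
      have h2 : q (i + 1) = q i := h.1 _ _ (ih ▸ hsl) (hq.2 i)
      rw [h1, h2, ih]
    · have hpne : p (i + 1) ≠ p i := fun e => hsl (by have := hp.2 i; rwa [e] at this)
      have hqne : q (i + 1) ≠ q i := fun e => hsl (by have := hq.2 i; rw [e, ← ih] at this; exact this)
      have hmem : p (i + 1) ∈ Set.range q := hr ▸ Set.mem_range_self (i + 1)
      obtain ⟨m, hm⟩ := hmem
      have hmem' : q (i + 1) ∈ Set.range p := hr ▸ Set.mem_range_self (i + 1)
      obtain ⟨m', hm'⟩ := hmem'
      have hsp : TransGen (fun a b => a ≠ b ∧ K.rel a b) (p i) (p (i + 1)) :=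
        TransGen.single ⟨Ne.symm hpne, hp.2 i⟩
      have hsq : TransGen (fun a b => a ≠ b ∧ K.rel a b) (q i) (q (i + 1)) :=
        TransGen.single ⟨Ne.symm hqne, hq.2 i⟩
      have hmgt : i + 1 ≤ m := by
        by_contra hc
        push_neg at hc
        have hle : m ≤ i := Nat.lt_succ_iff.mp hc
        rcases kripke_mono hq hle with h1 | h1
        · exact hpne (by rw [← hm, h1, ih])
        · have : TransGen (fun a b => a ≠ b ∧ K.rel a b) (p (i + 1)) (p i) := by
            rw [← hm, ih]; exact h1
          exact asymm _ _ this hsp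
      have hmgt' : i + 1 ≤ m' := by
        by_contra hc
        push_neg at hc
        have hle : m' ≤ i := Nat.lt_succ_iff.mp hc
        rcases kripke_mono hp hle with h1 | h1
        · exact hqne (by rw [← hm', h1, ← ih])
        · have : TransGen (fun a b => a ≠ b ∧ K.rel a b) (q (i + 1)) (q i) := by
            rw [← hm', ← ih]; exact h1
          exact asymm _ _ this hsq
      rcases kripke_mono hq hmgt with hB | hB
      · rw [hB, hm]
      · rcases kripke_mono hp hmgt' with hA | hA
        · rw [hA, hm']
        · rw [hm] at hB
          rw [hm'] at hA
          exact absurd hA (fun hA => asymm _ _ hA hB)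

/-- An acyclic Kripke structure with `n` states has at most `2 ^ n` traces. -/
theorem acyclic_traces_le {S AP : Type} [Fintype S]
    (K : Kripke S AP) (h : K.Acyclic) :
    Nat.card {t : ℕ → Set AP // K.IsTrace t} ≤ 2 ^ Fintype.card S := by
  classical
  have key : ∀ t : {t : ℕ → Set AP // K.IsTrace t}, ∃ p : ℕ → S,
      K.IsPath p ∧ ∀ i, t.1 i = K.label (p i) := fun t => t.2
  choose pf hpf hlbl using key
  let f : {t : ℕ → Set AP // K.IsTrace t} → Finset S :=
    fun t => Finset.univ.filter (· ∈ Set.range (pf t))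
  have hinj : Function.Injective f := by
    intro t1 t2 hf
    have hrange : Set.range (pf t1) = Set.range (pf t2) := by
      ext s
      have := Finset.ext_iff.mp hf s
      simpa [f] using this
    have hpeq : pf t1 = pf t2 := kripke_path_eq h (hpf t1) (hpf t2) hrange
    apply Subtype.ext
    funext i
    rw [hlbl t1 i, hlbl t2 i, hpeq]
  calc Nat.card {t : ℕ → Set AP // K.IsTrace t} ≤ Nat.card (Finset S) :=
        Nat.card_le_card_of_injective f hinj
    _ = 2 ^ Fintype.card S := by
        rw [Nat.card_eq_fintype_card, Fintype.card_finset]
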